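/- If a root triangle with assigned root type τ ∈ {0,1} is uniformly refined to level L, then any contiguous TM segment of level-L subtriangles that contains the last subtriangle in TM order, or that contains the first subtriangle in TM order, has at most L + 1 face-connected components. -/

import Mathlib

/-- Points of the plane. -/
abbrev TMV : Type := Fin 2 → ℝ

/-- Midpoint of two points of the plane. -/
noncomputable def tmMid (a b : TMV) : TMV := (1 / 2 : ℝ) • (a + b)

/-- Bey's refinement: the four children of a triangle `[x 0, x 1, x 2]`. -/
noncomputable def beyChild (x : Fin 3 → TMV) : Fin 4 → Fin 3 → TMV :=
  ![![x 0, tmMid (x 0) (x 1), tmMid (x 0) (x 2)],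
    ![tmMid (x 0) (x 1), x 1, tmMid (x 1) (x 2)],
    ![tmMid (x 0) (x 2), tmMid (x 1) (x 2), x 2],
    ![tmMid (x 0) (x 1), tmMid (x 0) (x 2), tmMid (x 1) (x 2)]]

/-- The vertices of the subtriangle of the root `x` reached by the successive
child choices recorded in the list `p`. -/
noncomputable def tmVerts (x : Fin 3 → TMV) : List (Fin 4) → Fin 3 → TMV
  | [] => x
  | i :: p => tmVerts (beyChild x i) p

/-- The type of the subtriangle reached by path `p` from a root of type `τ`:
children `T_0, T_1, T_2` inherit the parent's type, `T_3` has the opposite type. -/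
def tmType (τ : Fin 2) : List (Fin 4) → Fin 2
  | [] => τ
  | i :: p => tmType (if i = 3 then 1 - τ else τ) p

/-- The position of Bey child `i` in the TM traversal order of the children of a
parent of type `b`: order `T_0, T_1, T_3, T_2` for type 0 and `T_0, T_3, T_1, T_2`
for type 1. -/
def tmChildRank (b : Fin 2) : Fin 4 → Fin 4 :=
  if b = 0 then ![0, 1, 3, 2] else ![0, 2, 3, 1]

/-- The TM index of the level-`p.length` subtriangle given by path `p` from a root
of type `τ`, among all subtriangles of that level. -/
def tmIndex (τ : Fin 2) : List (Fin 4) → ℕ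
  | [] => 0
  | i :: p => (tmChildRank τ i : ℕ) * 4 ^ p.length + tmIndex (if i = 3 then 1 - τ else τ) p

/-- The closed triangle spanned by the three vertices. -/
def triSet (x : Fin 3 → TMV) : Set TMV := convexHull ℝ {x 0, x 1, x 2}

/-- `e` is a complete edge of the triangle with vertices `x`. -/
def triIsEdge (x : Fin 3 → TMV) (e : Set TMV) : Prop :=
  ∃ i j : Fin 3, i ≠ j ∧ e = segment ℝ (x i) (x j)

/-- Two triangles are face-neighbors if their intersection is a complete edge of both. -/
def triFaceNbr (x y : Fin 3 → TMV) : Prop :=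
  ∃ e, triIsEdge x e ∧ triIsEdge y e ∧ triSet x ∩ triSet y = e

/-- A set `S` of subtriangle paths (with root vertices `x0`) is face-connected. -/
def triFaceConnected (x0 : Fin 3 → TMV) (S : Set (List (Fin 4))) : Prop :=
  ∀ p ∈ S, ∀ q ∈ S,
    Relation.ReflTransGen
      (fun a b => a ∈ S ∧ b ∈ S ∧ triFaceNbr (tmVerts x0 a) (tmVerts x0 b)) p q

/-- `S` has at most `n` face-connected components. -/
def triCompBound (x0 : Fin 3 → TMV) (S : Set (List (Fin 4))) (n : ℕ) : Prop :=
  ∃ f : Fin n → Set (List (Fin 4)), S = ⋃ i, f i ∧ ∀ i, triFaceConnected x0 (f i)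

/-- `S` is a contiguous segment of the TM curve through the uniform level-`L`
refinement of a root of type `τ`: a set of level-`L` paths forming an interval
in the TM order. -/
def tmSegment (τ : Fin 2) (L : ℕ) (S : Set (List (Fin 4))) : Prop :=
  (∀ p ∈ S, p.length = L) ∧
  ∀ p q r : List (Fin 4), p.length = L → q.length = L → r.length = L →
    p ∈ S → r ∈ S → tmIndex τ p ≤ tmIndex τ q → tmIndex τ q ≤ tmIndex τ r → q ∈ S

def det2 (u v : TMV) : ℝ := u 0 * v 1 - u 1 * v 0

def detT (x : Fin 3 → TMV) : ℝ := det2 (x 1 - x 0) (x 2 - x 0)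

lemma det2_comb (a z w : TMV) (u v : ℝ) (huv : u + v = 1) (p q : TMV) :
    det2 (u • p + v • q - a) (w - z) =
      u * det2 (p - a) (w - z) + v * det2 (q - a) (w - z) := by
  have hv : v = 1 - u := by linarith
  subst hv
  simp only [det2, Pi.add_apply, Pi.sub_apply, Pi.smul_apply, smul_eq_mul]
  ring

lemma hull_inter (a b c d : TMV)
    (hsign : det2 (c - a) (b - a) * det2 (d - a) (b - a) < 0) :
    convexHull ℝ {a, b, c} ∩ convexHull ℝ {a, b, d} = segment ℝ a b := by
  have hψa : det2 (a - a) (b - a) = 0 := by simp [det2]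
  have hψb : det2 (b - a) (b - a) = 0 := by simp [det2]; ring
  have hseg0 : ∀ y ∈ segment ℝ a b, det2 (y - a) (b - a) = 0 := by
    rintro y ⟨u, v, hu, hv, huv, rfl⟩
    rw [det2_comb a a b u v huv, hψa, hψb]; ring
  have key : ∀ e : TMV, ∀ x ∈ convexHull ℝ ({a, b, e} : Set TMV),
      (∃ r : ℝ, 0 ≤ r ∧ det2 (x - a) (b - a) = r * det2 (e - a) (b - a) ∧
        (r = 0 → x ∈ segment ℝ a b)) := by
    intro e x hx
    rw [← convexJoin_segment_singleton, mem_convexJoin] at hx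
    obtain ⟨y, hy, z, hz, u, v, hu, hv, huv, rfl⟩ := hx
    rw [Set.mem_singleton_iff] at hz; subst hz
    refine ⟨v, hv, ?_, ?_⟩
    · rw [det2_comb a a _ u v huv, hseg0 y hy]; ring
    · rintro rfl
      have hu1 : u = 1 := by linarith
      subst hu1
      simpa using hy
  rw [Set.Subset.antisymm_iff]
  constructor
  · rintro x ⟨hx1, hx2⟩
    obtain ⟨r, hr, hxr, hr0⟩ := key c x hx1
    obtain ⟨s, hs, hxs, hs0⟩ := key d x hx2
    have hr' : r = 0 := by
      rcases mul_neg_iff.mp hsign with ⟨h1, h2⟩ | ⟨h1, h2⟩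
      · nlinarith
      · nlinarith
    exact hr0 hr'
  · intro y hy
    exact ⟨segment_subset_convexHull (by simp) (by simp) hy,
           segment_subset_convexHull (by simp) (by simp) hy⟩

lemma faceNbr_master (X Y : Fin 3 → TMV) (a b c d : TMV)
    (hX : ({X 0, X 1, X 2} : Set TMV) = {a, b, c})
    (hY : ({Y 0, Y 1, Y 2} : Set TMV) = {a, b, d})
    (hXe : ∃ i j : Fin 3, i ≠ j ∧ X i = a ∧ X j = b)
    (hYe : ∃ i j : Fin 3, i ≠ j ∧ Y i = a ∧ Y j = b)
    (hsign : det2 (c - a) (b - a) * det2 (d - a) (b - a) < 0) :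
    triFaceNbr X Y := by
  refine ⟨segment ℝ a b, ?_, ?_, ?_⟩
  · obtain ⟨i, j, hij, ha, hb⟩ := hXe
    exact ⟨i, j, hij, by rw [ha, hb]⟩
  · obtain ⟨i, j, hij, ha, hb⟩ := hYe
    exact ⟨i, j, hij, by rw [ha, hb]⟩
  · rw [triSet, triSet, hX, hY]
    exact hull_inter a b c d hsign

lemma triFaceNbr_symm {X Y : Fin 3 → TMV} (h : triFaceNbr X Y) : triFaceNbr Y X := by
  obtain ⟨e, h1, h2, h3⟩ := h
  exact ⟨e, h2, h1, by rw [Set.inter_comm]; exact h3⟩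

-- beyChild entries
lemma beyChild_corner (x : Fin 3 → TMV) (i : Fin 3) (j : Fin 3) :
    beyChild x ⟨i, by omega⟩ j = x i + (2:ℝ)⁻¹ • (x j - x i) := by
  fin_cases i <;> fin_cases j <;>
    simp [beyChild, tmMid] <;> module

lemma tmVerts_replicate (x : Fin 3 → TMV) (i : Fin 3) (k : ℕ) (j : Fin 3) :
    tmVerts x (List.replicate k (⟨i, by omega⟩ : Fin 4)) j
      = x i + ((2:ℝ)⁻¹) ^ k • (x j - x i) := by
  induction k generalizing x with
  | zero => simp [tmVerts]
  | succ k ih =>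
    rw [List.replicate_succ]
    show tmVerts (beyChild x ⟨i, by omega⟩) _ j = _
    rw [ih (beyChild x ⟨i, by omega⟩)]
    rw [beyChild_corner, beyChild_corner]
    simp only [pow_succ]
    module

lemma det2_smul (r t : ℝ) (u v : TMV) : det2 (r • u) (t • v) = r * t * det2 u v := by
  simp [det2]; ring

lemma sq_pos_ne {D : ℝ} (hD : D ≠ 0) : 0 < D ^ 2 :=
  lt_of_le_of_ne (sq_nonneg _) (Ne.symm (pow_ne_zero 2 hD))

-- Bridge between child 1 (corner descent at vertex 2) and child 3 (corner at vertex 2),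
-- meeting at m12.
lemma bridge13 (x : Fin 3 → TMV) (hD : detT x ≠ 0) (k : ℕ) :
    triFaceNbr (tmVerts x ((1:Fin 4) :: List.replicate k 2))
               (tmVerts x ((3:Fin 4) :: List.replicate k 2)) := by
  have hX : ∀ j, tmVerts x ((1:Fin 4) :: List.replicate k 2) j
      = beyChild x 1 2 + ((2:ℝ)⁻¹)^k • (beyChild x 1 j - beyChild x 1 2) :=
    fun j => tmVerts_replicate (beyChild x 1) 2 k j
  have hY : ∀ j, tmVerts x ((3:Fin 4) :: List.replicate k 2) j
      = beyChild x 3 2 + ((2:ℝ)⁻¹)^k • (beyChild x 3 j - beyChild x 3 2) :=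
    fun j => tmVerts_replicate (beyChild x 3) 2 k j
  have e10 : beyChild x 1 0 = tmMid (x 0) (x 1) := rfl
  have e11 : beyChild x 1 1 = x 1 := rfl
  have e12 : beyChild x 1 2 = tmMid (x 1) (x 2) := rfl
  have e30 : beyChild x 3 0 = tmMid (x 0) (x 1) := rfl
  have e31 : beyChild x 3 1 = tmMid (x 0) (x 2) := rfl
  have e32 : beyChild x 3 2 = tmMid (x 1) (x 2) := rfl
  set s : ℝ := ((2:ℝ)⁻¹)^k with hs
  have hspos : 0 < s := by positivity
  apply faceNbr_master _ _ (tmMid (x 1) (x 2))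
      (tmMid (x 1) (x 2) + s • (tmMid (x 0) (x 1) - tmMid (x 1) (x 2)))
      (tmMid (x 1) (x 2) + s • (x 1 - tmMid (x 1) (x 2)))
      (tmMid (x 1) (x 2) + s • (tmMid (x 0) (x 2) - tmMid (x 1) (x 2)))
  · rw [hX 0, hX 1, hX 2, e10, e11, e12]
    ext t; simp; tauto
  · rw [hY 0, hY 1, hY 2, e30, e31, e32]
    ext t; simp; tauto
  · exact ⟨2, 0, by decide, by rw [hX 2, e12]; module, by rw [hX 0, e10, e12]⟩
  · exact ⟨2, 0, by decide, by rw [hY 2, e32]; module, by rw [hY 0, e30, e32]⟩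
  · rw [add_sub_cancel_left, add_sub_cancel_left, add_sub_cancel_left,
      det2_smul, det2_smul]
    have hval : det2 (x 1 - tmMid (x 1) (x 2)) (tmMid (x 0) (x 1) - tmMid (x 1) (x 2)) *
        det2 (tmMid (x 0) (x 2) - tmMid (x 1) (x 2)) (tmMid (x 0) (x 1) - tmMid (x 1) (x 2))
        = -(detT x)^2 / 16 := by
      simp only [det2, detT, tmMid, Pi.add_apply, Pi.sub_apply, Pi.smul_apply, smul_eq_mul]
      ring
    have h2 : 0 < s ^ 2 * s ^ 2 * ((detT x) ^ 2 / 16) := by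
      have := sq_pos_ne hD
      positivity
    nlinarith [h2, hval]

lemma bridge03 (x : Fin 3 → TMV) (hD : detT x ≠ 0) (k : ℕ) :
    triFaceNbr (tmVerts x ((0:Fin 4) :: List.replicate k 2))
               (tmVerts x ((3:Fin 4) :: List.replicate k 1)) := by
  have hX : ∀ j, tmVerts x ((0:Fin 4) :: List.replicate k 2) j
      = beyChild x 0 2 + ((2:ℝ)⁻¹)^k • (beyChild x 0 j - beyChild x 0 2) :=
    fun j => tmVerts_replicate (beyChild x 0) 2 k j
  have hY : ∀ j, tmVerts x ((3:Fin 4) :: List.replicate k 1) j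
      = beyChild x 3 1 + ((2:ℝ)⁻¹)^k • (beyChild x 3 j - beyChild x 3 1) :=
    fun j => tmVerts_replicate (beyChild x 3) 1 k j
  have eX0 : beyChild x 0 0 = x 0 := rfl
  have eX1 : beyChild x 0 1 = tmMid (x 0) (x 1) := rfl
  have eX2 : beyChild x 0 2 = tmMid (x 0) (x 2) := rfl
  have eY0 : beyChild x 3 0 = tmMid (x 0) (x 1) := rfl
  have eY1 : beyChild x 3 1 = tmMid (x 0) (x 2) := rfl
  have eY2 : beyChild x 3 2 = tmMid (x 1) (x 2) := rfl
  set s : ℝ := ((2:ℝ)⁻¹)^k with hs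
  have hspos : 0 < s := by positivity
  apply faceNbr_master _ _ (tmMid (x 0) (x 2)) (tmMid (x 0) (x 2) + s • (tmMid (x 0) (x 1) - tmMid (x 0) (x 2))) (tmMid (x 0) (x 2) + s • (x 0 - tmMid (x 0) (x 2))) (tmMid (x 0) (x 2) + s • (tmMid (x 1) (x 2) - tmMid (x 0) (x 2)))
  · rw [hX 0, hX 1, hX 2, eX0, eX1, eX2]
    ext t; simp only [Set.mem_insert_iff, Set.mem_singleton_iff]
    constructor <;> intro h <;> rcases h with h|h|h <;> (try rw [h]) <;> first
      | tauto
      | (left; module)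
      | (right; left; module)
      | (right; right; module)
  · rw [hY 0, hY 1, hY 2, eY0, eY1, eY2]
    ext t; simp only [Set.mem_insert_iff, Set.mem_singleton_iff]
    constructor <;> intro h <;> rcases h with h|h|h <;> (try rw [h]) <;> first
      | tauto
      | (left; module)
      | (right; left; module)
      | (right; right; module)
  · exact ⟨2, 1, by decide, by rw [hX 2, eX2]; module, by rw [hX 1, eX1, eX2]⟩
  · exact ⟨1, 0, by decide, by rw [hY 1, eY1]; module, by rw [hY 0, eY0, eY1]⟩
  · rw [add_sub_cancel_left, add_sub_cancel_left, add_sub_cancel_left,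
      det2_smul, det2_smul]
    have hval : det2 (x 0 - tmMid (x 0) (x 2)) (tmMid (x 0) (x 1) - tmMid (x 0) (x 2)) *
        det2 (tmMid (x 1) (x 2) - tmMid (x 0) (x 2)) (tmMid (x 0) (x 1) - tmMid (x 0) (x 2)) = -(detT x)^2 / 16 := by
      simp only [det2, detT, tmMid, Pi.add_apply, Pi.sub_apply, Pi.smul_apply, smul_eq_mul]
      ring
    have h2 : 0 < s ^ 2 * s ^ 2 * ((detT x) ^ 2 / 16) := by
      have := sq_pos_ne hD
      positivity
    nlinarith [h2, hval]

lemma bridge23 (x : Fin 3 → TMV) (hD : detT x ≠ 0) (k : ℕ) :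
    triFaceNbr (tmVerts x ((2:Fin 4) :: List.replicate k 1))
               (tmVerts x ((3:Fin 4) :: List.replicate k 2)) := by
  have hX : ∀ j, tmVerts x ((2:Fin 4) :: List.replicate k 1) j
      = beyChild x 2 1 + ((2:ℝ)⁻¹)^k • (beyChild x 2 j - beyChild x 2 1) :=
    fun j => tmVerts_replicate (beyChild x 2) 1 k j
  have hY : ∀ j, tmVerts x ((3:Fin 4) :: List.replicate k 2) j
      = beyChild x 3 2 + ((2:ℝ)⁻¹)^k • (beyChild x 3 j - beyChild x 3 2) :=
    fun j => tmVerts_replicate (beyChild x 3) 2 k j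
  have eX0 : beyChild x 2 0 = tmMid (x 0) (x 2) := rfl
  have eX1 : beyChild x 2 1 = tmMid (x 1) (x 2) := rfl
  have eX2 : beyChild x 2 2 = x 2 := rfl
  have eY0 : beyChild x 3 0 = tmMid (x 0) (x 1) := rfl
  have eY1 : beyChild x 3 1 = tmMid (x 0) (x 2) := rfl
  have eY2 : beyChild x 3 2 = tmMid (x 1) (x 2) := rfl
  set s : ℝ := ((2:ℝ)⁻¹)^k with hs
  have hspos : 0 < s := by positivity
  apply faceNbr_master _ _ (tmMid (x 1) (x 2)) (tmMid (x 1) (x 2) + s • (tmMid (x 0) (x 2) - tmMid (x 1) (x 2))) (tmMid (x 1) (x 2) + s • (x 2 - tmMid (x 1) (x 2))) (tmMid (x 1) (x 2) + s • (tmMid (x 0) (x 1) - tmMid (x 1) (x 2)))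
  · rw [hX 0, hX 1, hX 2, eX0, eX1, eX2]
    ext t; simp only [Set.mem_insert_iff, Set.mem_singleton_iff]
    constructor <;> intro h <;> rcases h with h|h|h <;> (try rw [h]) <;> first
      | tauto
      | (left; module)
      | (right; left; module)
      | (right; right; module)
  · rw [hY 0, hY 1, hY 2, eY0, eY1, eY2]
    ext t; simp only [Set.mem_insert_iff, Set.mem_singleton_iff]
    constructor <;> intro h <;> rcases h with h|h|h <;> (try rw [h]) <;> first
      | tauto
      | (left; module)
      | (right; left; module)
      | (right; right; module)
  · exact ⟨1, 0, by decide, by rw [hX 1, eX1]; module, by rw [hX 0, eX0, eX1]⟩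
  · exact ⟨2, 1, by decide, by rw [hY 2, eY2]; module, by rw [hY 1, eY1, eY2]⟩
  · rw [add_sub_cancel_left, add_sub_cancel_left, add_sub_cancel_left,
      det2_smul, det2_smul]
    have hval : det2 (x 2 - tmMid (x 1) (x 2)) (tmMid (x 0) (x 2) - tmMid (x 1) (x 2)) *
        det2 (tmMid (x 0) (x 1) - tmMid (x 1) (x 2)) (tmMid (x 0) (x 2) - tmMid (x 1) (x 2)) = -(detT x)^2 / 16 := by
      simp only [det2, detT, tmMid, Pi.add_apply, Pi.sub_apply, Pi.smul_apply, smul_eq_mul]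
      ring
    have h2 : 0 < s ^ 2 * s ^ 2 * ((detT x) ^ 2 / 16) := by
      have := sq_pos_ne hD
      positivity
    nlinarith [h2, hval]

lemma bridge03L (x : Fin 3 → TMV) (hD : detT x ≠ 0) (k : ℕ) :
    triFaceNbr (tmVerts x ((0:Fin 4) :: List.replicate k 1))
               (tmVerts x ((3:Fin 4) :: List.replicate k 0)) := by
  have hX : ∀ j, tmVerts x ((0:Fin 4) :: List.replicate k 1) j
      = beyChild x 0 1 + ((2:ℝ)⁻¹)^k • (beyChild x 0 j - beyChild x 0 1) :=
    fun j => tmVerts_replicate (beyChild x 0) 1 k j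
  have hY : ∀ j, tmVerts x ((3:Fin 4) :: List.replicate k 0) j
      = beyChild x 3 0 + ((2:ℝ)⁻¹)^k • (beyChild x 3 j - beyChild x 3 0) :=
    fun j => tmVerts_replicate (beyChild x 3) 0 k j
  have eX0 : beyChild x 0 0 = x 0 := rfl
  have eX1 : beyChild x 0 1 = tmMid (x 0) (x 1) := rfl
  have eX2 : beyChild x 0 2 = tmMid (x 0) (x 2) := rfl
  have eY0 : beyChild x 3 0 = tmMid (x 0) (x 1) := rfl
  have eY1 : beyChild x 3 1 = tmMid (x 0) (x 2) := rfl
  have eY2 : beyChild x 3 2 = tmMid (x 1) (x 2) := rfl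
  set s : ℝ := ((2:ℝ)⁻¹)^k with hs
  have hspos : 0 < s := by positivity
  apply faceNbr_master _ _ (tmMid (x 0) (x 1)) (tmMid (x 0) (x 1) + s • (tmMid (x 0) (x 2) - tmMid (x 0) (x 1))) (tmMid (x 0) (x 1) + s • (x 0 - tmMid (x 0) (x 1))) (tmMid (x 0) (x 1) + s • (tmMid (x 1) (x 2) - tmMid (x 0) (x 1)))
  · rw [hX 0, hX 1, hX 2, eX0, eX1, eX2]
    ext t; simp only [Set.mem_insert_iff, Set.mem_singleton_iff]
    constructor <;> intro h <;> rcases h with h|h|h <;> (try rw [h]) <;> first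
      | tauto
      | (left; module)
      | (right; left; module)
      | (right; right; module)
  · rw [hY 0, hY 1, hY 2, eY0, eY1, eY2]
    ext t; simp only [Set.mem_insert_iff, Set.mem_singleton_iff]
    constructor <;> intro h <;> rcases h with h|h|h <;> (try rw [h]) <;> first
      | tauto
      | (left; module)
      | (right; left; module)
      | (right; right; module)
  · exact ⟨1, 2, by decide, by rw [hX 1, eX1]; module, by rw [hX 2, eX2, eX1]⟩
  · exact ⟨0, 1, by decide, by rw [hY 0, eY0]; module, by rw [hY 1, eY1, eY0]⟩
  · rw [add_sub_cancel_left, add_sub_cancel_left, add_sub_cancel_left,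
      det2_smul, det2_smul]
    have hval : det2 (x 0 - tmMid (x 0) (x 1)) (tmMid (x 0) (x 2) - tmMid (x 0) (x 1)) *
        det2 (tmMid (x 1) (x 2) - tmMid (x 0) (x 1)) (tmMid (x 0) (x 2) - tmMid (x 0) (x 1)) = -(detT x)^2 / 16 := by
      simp only [det2, detT, tmMid, Pi.add_apply, Pi.sub_apply, Pi.smul_apply, smul_eq_mul]
      ring
    have h2 : 0 < s ^ 2 * s ^ 2 * ((detT x) ^ 2 / 16) := by
      have := sq_pos_ne hD
      positivity
    nlinarith [h2, hval]

lemma bridge13L (x : Fin 3 → TMV) (hD : detT x ≠ 0) (k : ℕ) :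
    triFaceNbr (tmVerts x ((1:Fin 4) :: List.replicate k 0))
               (tmVerts x ((3:Fin 4) :: List.replicate k 0)) := by
  have hX : ∀ j, tmVerts x ((1:Fin 4) :: List.replicate k 0) j
      = beyChild x 1 0 + ((2:ℝ)⁻¹)^k • (beyChild x 1 j - beyChild x 1 0) :=
    fun j => tmVerts_replicate (beyChild x 1) 0 k j
  have hY : ∀ j, tmVerts x ((3:Fin 4) :: List.replicate k 0) j
      = beyChild x 3 0 + ((2:ℝ)⁻¹)^k • (beyChild x 3 j - beyChild x 3 0) :=
    fun j => tmVerts_replicate (beyChild x 3) 0 k j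
  have eX0 : beyChild x 1 0 = tmMid (x 0) (x 1) := rfl
  have eX1 : beyChild x 1 1 = x 1 := rfl
  have eX2 : beyChild x 1 2 = tmMid (x 1) (x 2) := rfl
  have eY0 : beyChild x 3 0 = tmMid (x 0) (x 1) := rfl
  have eY1 : beyChild x 3 1 = tmMid (x 0) (x 2) := rfl
  have eY2 : beyChild x 3 2 = tmMid (x 1) (x 2) := rfl
  set s : ℝ := ((2:ℝ)⁻¹)^k with hs
  have hspos : 0 < s := by positivity
  apply faceNbr_master _ _ (tmMid (x 0) (x 1)) (tmMid (x 0) (x 1) + s • (tmMid (x 1) (x 2) - tmMid (x 0) (x 1))) (tmMid (x 0) (x 1) + s • (x 1 - tmMid (x 0) (x 1))) (tmMid (x 0) (x 1) + s • (tmMid (x 0) (x 2) - tmMid (x 0) (x 1)))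
  · rw [hX 0, hX 1, hX 2, eX0, eX1, eX2]
    ext t; simp only [Set.mem_insert_iff, Set.mem_singleton_iff]
    constructor <;> intro h <;> rcases h with h|h|h <;> (try rw [h]) <;> first
      | tauto
      | (left; module)
      | (right; left; module)
      | (right; right; module)
  · rw [hY 0, hY 1, hY 2, eY0, eY1, eY2]
    ext t; simp only [Set.mem_insert_iff, Set.mem_singleton_iff]
    constructor <;> intro h <;> rcases h with h|h|h <;> (try rw [h]) <;> first
      | tauto
      | (left; module)
      | (right; left; module)
      | (right; right; module)
  · exact ⟨0, 2, by decide, by rw [hX 0, eX0]; module, by rw [hX 2, eX2, eX0]⟩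
  · exact ⟨0, 2, by decide, by rw [hY 0, eY0]; module, by rw [hY 2, eY2, eY0]⟩
  · rw [add_sub_cancel_left, add_sub_cancel_left, add_sub_cancel_left,
      det2_smul, det2_smul]
    have hval : det2 (x 1 - tmMid (x 0) (x 1)) (tmMid (x 1) (x 2) - tmMid (x 0) (x 1)) *
        det2 (tmMid (x 0) (x 2) - tmMid (x 0) (x 1)) (tmMid (x 1) (x 2) - tmMid (x 0) (x 1)) = -(detT x)^2 / 16 := by
      simp only [det2, detT, tmMid, Pi.add_apply, Pi.sub_apply, Pi.smul_apply, smul_eq_mul]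
      ring
    have h2 : 0 < s ^ 2 * s ^ 2 * ((detT x) ^ 2 / 16) := by
      have := sq_pos_ne hD
      positivity
    nlinarith [h2, hval]

lemma detT_beyChild {x : Fin 3 → TMV} (hD : detT x ≠ 0) (i : Fin 4) :
    detT (beyChild x i) ≠ 0 := by
  fin_cases i <;> simp only []
  · show detT (beyChild x 0) ≠ 0
    have e0 : beyChild x 0 0 = x 0 := rfl
    have e1 : beyChild x 0 1 = tmMid (x 0) (x 1) := rfl
    have e2 : beyChild x 0 2 = tmMid (x 0) (x 2) := rfl
    have h : detT (beyChild x 0) = detT x / 4 := by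
      simp only [detT, det2, e0, e1, e2, tmMid, Pi.add_apply, Pi.sub_apply,
        Pi.smul_apply, smul_eq_mul]
      ring
    rw [h]; intro h2; exact hD (by linarith)
  · show detT (beyChild x 1) ≠ 0
    have e0 : beyChild x 1 0 = tmMid (x 0) (x 1) := rfl
    have e1 : beyChild x 1 1 = x 1 := rfl
    have e2 : beyChild x 1 2 = tmMid (x 1) (x 2) := rfl
    have h : detT (beyChild x 1) = detT x / 4 := by
      simp only [detT, det2, e0, e1, e2, tmMid, Pi.add_apply, Pi.sub_apply,
        Pi.smul_apply, smul_eq_mul]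
      ring
    rw [h]; intro h2; exact hD (by linarith)
  · show detT (beyChild x 2) ≠ 0
    have e0 : beyChild x 2 0 = tmMid (x 0) (x 2) := rfl
    have e1 : beyChild x 2 1 = tmMid (x 1) (x 2) := rfl
    have e2 : beyChild x 2 2 = x 2 := rfl
    have h : detT (beyChild x 2) = detT x / 4 := by
      simp only [detT, det2, e0, e1, e2, tmMid, Pi.add_apply, Pi.sub_apply,
        Pi.smul_apply, smul_eq_mul]
      ring
    rw [h]; intro h2; exact hD (by linarith)
  · show detT (beyChild x 3) ≠ 0
    have e0 : beyChild x 3 0 = tmMid (x 0) (x 1) := rfl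
    have e1 : beyChild x 3 1 = tmMid (x 0) (x 2) := rfl
    have e2 : beyChild x 3 2 = tmMid (x 1) (x 2) := rfl
    have h : detT (beyChild x 3) = -detT x / 4 := by
      simp only [detT, det2, e0, e1, e2, tmMid, Pi.add_apply, Pi.sub_apply,
        Pi.smul_apply, smul_eq_mul]
      ring
    rw [h]; intro h2; exact hD (by linarith)

lemma detT_ne_zero_of_affineIndependent {x : Fin 3 → TMV}
    (h : AffineIndependent ℝ x) : detT x ≠ 0 := by
  intro hdet
  rw [affineIndependent_iff] at h
  set u : TMV := x 1 - x 0 with hu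
  set v : TMV := x 2 - x 0 with hv
  have hconcl : ∀ b c : ℝ, b • u + c • v = 0 → (b = 0 ∧ c = 0) ∨ (b = 0 ∧ c = 0) → True := fun _ _ _ _ => trivial
  by_cases hcase : u 0 = 0 ∧ u 1 = 0 ∧ v 0 = 0 ∧ v 1 = 0
  · -- u = 0
    have := h Finset.univ ![-1, 1, 0] (by simp [Fin.sum_univ_three])
      (by
        funext j
        simp only [Fin.sum_univ_three]
        fin_cases j <;>
          simp only [Matrix.cons_val_zero, Matrix.cons_val_one, Matrix.head_cons,
            Matrix.cons_val_two, Matrix.tail_cons, Finset.sum_apply, Pi.add_apply,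
            Pi.smul_apply, smul_eq_mul, Pi.zero_apply] <;>
          · have h1 := hcase.1
            have h2 := hcase.2.1
            simp only [hu, Pi.sub_apply] at h1 h2
            first | linarith | (simp; linarith))
      1 (Finset.mem_univ _)
    simp at this
  · -- some coordinate nonzero; pick weights
    push_neg at hcase
    -- weights b, c with b • u + c • v = 0, (b, c) ≠ 0
    have hkey : ∃ b c : ℝ, ¬(b = 0 ∧ c = 0) ∧ ∀ j, b * u j + c * v j = 0 := by
      have hd : u 0 * v 1 - u 1 * v 0 = 0 := by
        have : detT x = u 0 * v 1 - u 1 * v 0 := rfl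
        linarith [hdet ▸ this]
      by_cases h0 : u 0 = 0 ∧ v 0 = 0
      · refine ⟨v 1, -(u 1), ?_, ?_⟩
        · rintro ⟨hb, hc⟩
          have hu1 : u 1 = 0 := by linarith
          exact hcase h0.1 hu1 h0.2 hb
        · intro j; fin_cases j
          · show v 1 * u 0 + -(u 1) * v 0 = 0
            rw [h0.1, h0.2]; ring
          · show v 1 * u 1 + -(u 1) * v 1 = 0
            ring
      · refine ⟨v 0, -(u 0), ?_, ?_⟩
        · rintro ⟨hb, hc⟩
          exact h0 ⟨by linarith, hb⟩
        · intro j; fin_cases j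
          · show v 0 * u 0 + -(u 0) * v 0 = 0
            ring
          · show v 0 * u 1 + -(u 0) * v 1 = 0
            nlinarith [hd]
    obtain ⟨b, c, hbc, hj⟩ := hkey
    have := h Finset.univ ![-(b + c), b, c]
      (by rw [Fin.sum_univ_three]
          show -(b + c) + b + c = 0
          ring)
      (by
        funext j
        simp only [Fin.sum_univ_three, Finset.sum_apply, Pi.add_apply, Pi.smul_apply,
          smul_eq_mul, Pi.zero_apply,
          Matrix.cons_val_zero, Matrix.cons_val_one, Matrix.head_cons,
          Matrix.cons_val_two, Matrix.tail_cons]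
        have := hj j
        simp only [hu, hv, Pi.sub_apply] at this
        ring_nf
        ring_nf at this
        linarith)
    apply hbc
    exact ⟨this 1 (Finset.mem_univ _), this 2 (Finset.mem_univ _)⟩

lemma detT_tmVerts {x : Fin 3 → TMV} (hD : detT x ≠ 0) (p : List (Fin 4)) :
    detT (tmVerts x p) ≠ 0 := by
  induction p generalizing x with
  | nil => exact hD
  | cons i p ih => exact ih (detT_beyChild hD i)

-- ## connectivity plumbing

lemma conn_mono {x0 : Fin 3 → TMV} {A B : Set (List (Fin 4))} (hAB : A ⊆ B)
    {p q : List (Fin 4)}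
    (h : Relation.ReflTransGen
      (fun a b => a ∈ A ∧ b ∈ A ∧ triFaceNbr (tmVerts x0 a) (tmVerts x0 b)) p q) :
    Relation.ReflTransGen
      (fun a b => a ∈ B ∧ b ∈ B ∧ triFaceNbr (tmVerts x0 a) (tmVerts x0 b)) p q :=
  Relation.ReflTransGen.mono (by intro _ _ h; exact ⟨hAB h.1, hAB h.2.1, h.2.2⟩) _ _ h

lemma conn_union {x0 : Fin 3 → TMV} {A B : Set (List (Fin 4))}
    (hA : triFaceConnected x0 A) (hB : triFaceConnected x0 B)
    {a b : List (Fin 4)} (ha : a ∈ A) (hb : b ∈ B)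
    (hab : triFaceNbr (tmVerts x0 a) (tmVerts x0 b)) :
    triFaceConnected x0 (A ∪ B) := by
  have step : Relation.ReflTransGen
      (fun u v => u ∈ A ∪ B ∧ v ∈ A ∪ B ∧ triFaceNbr (tmVerts x0 u) (tmVerts x0 v)) a b :=
    Relation.ReflTransGen.single ⟨Or.inl ha, Or.inr hb, hab⟩
  have step' : Relation.ReflTransGen
      (fun u v => u ∈ A ∪ B ∧ v ∈ A ∪ B ∧ triFaceNbr (tmVerts x0 u) (tmVerts x0 v)) b a :=
    Relation.ReflTransGen.single ⟨Or.inr hb, Or.inl ha, triFaceNbr_symm hab⟩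
  rintro p (hp | hp) q (hq | hq)
  · exact conn_mono Set.subset_union_left (hA p hp q hq)
  · exact ((conn_mono Set.subset_union_left (hA p hp a ha)).trans step).trans
      (conn_mono Set.subset_union_right (hB b hb q hq))
  · exact ((conn_mono Set.subset_union_right (hB p hp b hb)).trans step').trans
      (conn_mono Set.subset_union_left (hA a ha q hq))
  · exact conn_mono Set.subset_union_right (hB p hp q hq)

lemma conn_image {x0 : Fin 3 → TMV} {i : Fin 4} {A : Set (List (Fin 4))}
    (h : triFaceConnected (beyChild x0 i) A) :
    triFaceConnected x0 ((fun p => i :: p) '' A) := by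
  rintro p ⟨p', hp', rfl⟩ q ⟨q', hq', rfl⟩
  refine Relation.ReflTransGen.lift (fun l => i :: l) ?_ _ _ (h p' hp' q' hq')
  rintro u v ⟨hu, hv, huv⟩
  exact ⟨⟨u, hu, rfl⟩, ⟨v, hv, rfl⟩, huv⟩

lemma conn_empty (x0 : Fin 3 → TMV) : triFaceConnected x0 ∅ := by
  rintro p hp
  exact absurd hp (Set.notMem_empty p)

lemma conn_singleton (x0 : Fin 3 → TMV) (p : List (Fin 4)) :
    triFaceConnected x0 {p} := by
  rintro a rfl b rfl
  exact Relation.ReflTransGen.refl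

-- the full subtree of all length-L paths is face-connected
lemma full_conn : ∀ (L : ℕ) (x : Fin 3 → TMV), detT x ≠ 0 →
    triFaceConnected x {p : List (Fin 4) | p.length = L} := by
  intro L
  induction L with
  | zero =>
    intro x hD
    have : {p : List (Fin 4) | p.length = 0} = {[]} := by
      ext p; simp [List.length_eq_zero_iff]
    rw [this]; exact conn_singleton x []
  | succ L ih =>
    intro x hD
    have hdec : {p : List (Fin 4) | p.length = L + 1}
        = (((fun p => (3:Fin 4) :: p) '' {p | p.length = L}
            ∪ (fun p => (0:Fin 4) :: p) '' {p | p.length = L})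
            ∪ (fun p => (1:Fin 4) :: p) '' {p | p.length = L})
            ∪ (fun p => (2:Fin 4) :: p) '' {p | p.length = L} := by
      ext p
      constructor
      · intro hp
        match p, hp with
        | i :: p', hp => ?_
        have hl : p'.length = L := by simpa using hp
        fin_cases i
        · exact Or.inl (Or.inl (Or.inr ⟨p', hl, rfl⟩))
        · exact Or.inl (Or.inr ⟨p', hl, rfl⟩)
        · exact Or.inr ⟨p', hl, rfl⟩
        · exact Or.inl (Or.inl (Or.inl ⟨p', hl, rfl⟩))
      · rintro (((⟨p', hp', rfl⟩ | ⟨p', hp', rfl⟩) | ⟨p', hp', rfl⟩) | ⟨p', hp', rfl⟩) <;>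
          simpa using hp'
    rw [hdec]
    have h3 := conn_image (i := 3) (x0 := x) (ih _ (detT_beyChild hD 3))
    have h0 := conn_image (i := 0) (x0 := x) (ih _ (detT_beyChild hD 0))
    have h1 := conn_image (i := 1) (x0 := x) (ih _ (detT_beyChild hD 1))
    have h2 := conn_image (i := 2) (x0 := x) (ih _ (detT_beyChild hD 2))
    have u1 := conn_union h3 h0 ⟨List.replicate L 1, by simp, rfl⟩
      ⟨List.replicate L 2, by simp, rfl⟩ (triFaceNbr_symm (bridge03 x hD L))
    have u2 := conn_union u1 h1
      (Or.inl ⟨List.replicate L 2, by simp, rfl⟩)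
      ⟨List.replicate L 2, by simp, rfl⟩ (triFaceNbr_symm (bridge13 x hD L))
    exact conn_union u2 h2
      (Or.inl (Or.inl ⟨List.replicate L 2, by simp, rfl⟩))
      ⟨List.replicate L 1, by simp, rfl⟩ (triFaceNbr_symm (bridge23 x hD L))

-- ## index lemmas

lemma idx_lt (τ : Fin 2) (p : List (Fin 4)) : tmIndex τ p < 4 ^ p.length := by
  induction p generalizing τ with
  | nil => simp [tmIndex]
  | cons i p ih =>
    show (tmChildRank τ i : ℕ) * 4 ^ p.length + tmIndex _ p < 4 ^ (p.length + 1)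
    have h1 : (tmChildRank τ i : ℕ) ≤ 3 := Nat.lt_succ_iff.mp (tmChildRank τ i).isLt
    have h2 := ih (if i = 3 then 1 - τ else τ)
    have h3 : (tmChildRank τ i : ℕ) * 4 ^ p.length ≤ 3 * 4 ^ p.length :=
      Nat.mul_le_mul_right _ h1
    have h4 : 4 ^ (p.length + 1) = 4 * 4 ^ p.length := by ring
    omega

lemma idx_allTwos (τ : Fin 2) (L : ℕ) :
    tmIndex τ (List.replicate L (2 : Fin 4)) = 4 ^ L - 1 := by
  induction L generalizing τ with
  | zero => simp [tmIndex]
  | succ L ih =>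
    rw [List.replicate_succ]
    show (tmChildRank τ 2 : ℕ) * 4 ^ (List.replicate L (2:Fin 4)).length
        + tmIndex (if (2:Fin 4) = 3 then 1 - τ else τ) (List.replicate L 2) = 4 ^ (L+1) - 1
    have hr : (tmChildRank τ 2 : ℕ) = 3 := by
      fin_cases τ <;> rfl
    rw [if_neg (by decide : ¬((2:Fin 4) = 3))]
    rw [ih τ, hr, List.length_replicate]
    have h4 : 4 ^ (L + 1) = 4 * 4 ^ L := by ring
    have h5 : 1 ≤ 4 ^ L := Nat.one_le_pow _ _ (by norm_num)
    omega

lemma idx_allZeros (τ : Fin 2) (L : ℕ) :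
    tmIndex τ (List.replicate L (0 : Fin 4)) = 0 := by
  induction L generalizing τ with
  | zero => simp [tmIndex]
  | succ L ih =>
    rw [List.replicate_succ]
    show (tmChildRank τ 0 : ℕ) * 4 ^ (List.replicate L (0:Fin 4)).length
        + tmIndex (if (0:Fin 4) = 3 then 1 - τ else τ) (List.replicate L 0) = 0
    have hr : (tmChildRank τ 0 : ℕ) = 0 := by fin_cases τ <;> rfl
    rw [if_neg (by decide : ¬((0:Fin 4) = 3))]
    rw [ih τ, hr]
    simp

lemma idx_cons (τ : Fin 2) (i : Fin 4) (p : List (Fin 4)) :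
    tmIndex τ (i :: p) = (tmChildRank τ i : ℕ) * 4 ^ p.length
      + tmIndex (if i = 3 then 1 - τ else τ) p := rfl

-- ## assembly

lemma assemble (x : Fin 3 → TMV) (c : Fin 4) (n : ℕ)
    (S G g0 Sc : Set (List (Fin 4)))
    (hdec : S = G ∪ (fun p => c :: p) '' Sc)
    (hsub1 : G ⊆ g0) (hsub2 : g0 ⊆ G ∪ (fun p => c :: p) '' Sc)
    (f' : Fin (n + 1) → Set (List (Fin 4)))
    (hU : Sc = ⋃ i, f' i)
    (hconn : ∀ i, triFaceConnected (beyChild x c) (f' i))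
    (hg0 : triFaceConnected x g0)
    (a : List (Fin 4)) (hag : a ∈ g0) :
    ∃ f : Fin (n + 2) → Set (List (Fin 4)),
      S = (⋃ i, f i) ∧ (∀ i, triFaceConnected x (f i)) ∧ a ∈ f 0 := by
  refine ⟨Fin.cases g0 (fun i => (fun p => c :: p) '' (f' i)), ?_, ?_,
    by simp only [Fin.cases_zero]; exact hag⟩
  · rw [hdec]
    ext p
    simp only [Set.mem_iUnion, Set.mem_union]
    constructor
    · rintro (hp | ⟨p', hp', rfl⟩)
      · exact ⟨0, by simp only [Fin.cases_zero]; exact hsub1 hp⟩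
      · rw [hU] at hp'
        obtain ⟨i, hi⟩ := Set.mem_iUnion.mp hp'
        exact ⟨i.succ, by simp only [Fin.cases_succ]; exact ⟨p', hi, rfl⟩⟩
    · rintro ⟨i, hi⟩
      induction i using Fin.cases with
      | zero =>
        simp only [Fin.cases_zero] at hi
        rcases hsub2 hi with h | h
        · exact Or.inl h
        · exact Or.inr h
      | succ i =>
        simp only [Fin.cases_succ] at hi
        obtain ⟨p', hp', rfl⟩ := hi
        exact Or.inr ⟨p', by rw [hU]; exact Set.mem_iUnion.mpr ⟨i, hp'⟩, rfl⟩
  · intro i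
    induction i using Fin.cases with
    | zero => simp only [Fin.cases_zero]; exact hg0
    | succ i => simp only [Fin.cases_succ]; exact conn_image (hconn i)

-- ## subtree transfer lemmas

lemma sub_up {τ : Fin 2} {L : ℕ} {S : Set (List (Fin 4))} (i : Fin 4)
    (hlen : ∀ p ∈ S, p.length = L + 1)
    (hup : ∀ p ∈ S, ∀ q, q.length = L + 1 → tmIndex τ p ≤ tmIndex τ q → q ∈ S)
    {p : List (Fin 4)} (hp : (i :: p) ∈ S) {q : List (Fin 4)} (hq : q.length = L)
    (hle : tmIndex (if i = 3 then 1 - τ else τ) p ≤ tmIndex (if i = 3 then 1 - τ else τ) q) :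
    (i :: q) ∈ S := by
  apply hup _ hp (i :: q) (by simp [hq])
  rw [idx_cons, idx_cons]
  have hpl : p.length = L := by have := hlen _ hp; simpa using this
  rw [hpl, hq]
  omega

lemma sub_down {τ : Fin 2} {L : ℕ} {S : Set (List (Fin 4))} (i : Fin 4)
    (hlen : ∀ p ∈ S, p.length = L + 1)
    (hdn : ∀ p ∈ S, ∀ q, q.length = L + 1 → tmIndex τ q ≤ tmIndex τ p → q ∈ S)
    {p : List (Fin 4)} (hp : (i :: p) ∈ S) {q : List (Fin 4)} (hq : q.length = L)
    (hle : tmIndex (if i = 3 then 1 - τ else τ) q ≤ tmIndex (if i = 3 then 1 - τ else τ) p) :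
    (i :: q) ∈ S := by
  apply hdn _ hp (i :: q) (by simp [hq])
  rw [idx_cons, idx_cons]
  have hpl : p.length = L := by have := hlen _ hp; simpa using this
  rw [hpl, hq]
  omega

lemma sub_full {τ : Fin 2} {L : ℕ} {S : Set (List (Fin 4))} (i j : Fin 4)
    (hlen : ∀ p ∈ S, p.length = L + 1)
    (hup : ∀ p ∈ S, ∀ q, q.length = L + 1 → tmIndex τ p ≤ tmIndex τ q → q ∈ S)
    (hrank : (tmChildRank τ i : ℕ) < (tmChildRank τ j : ℕ))
    {p : List (Fin 4)} (hp : (i :: p) ∈ S) {q : List (Fin 4)} (hq : q.length = L) :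
    (j :: q) ∈ S := by
  apply hup _ hp (j :: q) (by simp [hq])
  rw [idx_cons, idx_cons]
  have hpl : p.length = L := by have := hlen _ hp; simpa using this
  rw [hpl, hq]
  have h1 : tmIndex (if i = 3 then 1 - τ else τ) p < 4 ^ L := by
    have := idx_lt (if i = 3 then 1 - τ else τ) p
    rwa [hpl] at this
  have hm : ((tmChildRank τ i : ℕ) + 1) * 4 ^ L ≤ (tmChildRank τ j : ℕ) * 4 ^ L :=
    Nat.mul_le_mul_right _ (by omega)
  rw [Nat.add_mul, one_mul] at hm
  omega

lemma sub_full_down {τ : Fin 2} {L : ℕ} {S : Set (List (Fin 4))} (i j : Fin 4)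
    (hlen : ∀ p ∈ S, p.length = L + 1)
    (hdn : ∀ p ∈ S, ∀ q, q.length = L + 1 → tmIndex τ q ≤ tmIndex τ p → q ∈ S)
    (hrank : (tmChildRank τ j : ℕ) < (tmChildRank τ i : ℕ))
    {p : List (Fin 4)} (hp : (i :: p) ∈ S) {q : List (Fin 4)} (hq : q.length = L) :
    (j :: q) ∈ S := by
  apply hdn _ hp (j :: q) (by simp [hq])
  rw [idx_cons, idx_cons]
  have hpl : p.length = L := by have := hlen _ hp; simpa using this
  rw [hpl, hq]
  have h1 : tmIndex (if j = 3 then 1 - τ else τ) q < 4 ^ L := by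
    have := idx_lt (if j = 3 then 1 - τ else τ) q
    rwa [hq] at this
  have hm : ((tmChildRank τ j : ℕ) + 1) * 4 ^ L ≤ (tmChildRank τ i : ℕ) * 4 ^ L :=
    Nat.mul_le_mul_right _ (by omega)
  rw [Nat.add_mul, one_mul] at hm
  omega

lemma idx_le_allTwos (τ : Fin 2) {L : ℕ} {q : List (Fin 4)} (hq : q.length = L) :
    tmIndex τ q ≤ tmIndex τ (List.replicate L 2) := by
  rw [idx_allTwos]
  have := idx_lt τ q
  rw [hq] at this
  omega

lemma idx_ge_allZeros (τ : Fin 2) {L : ℕ} (q : List (Fin 4)) :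
    tmIndex τ (List.replicate L 0) ≤ tmIndex τ q := by
  rw [idx_allZeros]
  exact Nat.zero_le _

def subSet (S : Set (List (Fin 4))) (i : Fin 4) : Set (List (Fin 4)) := {p | i :: p ∈ S}

lemma tail_bound : ∀ (L : ℕ) (x : Fin 3 → TMV), detT x ≠ 0 → ∀ (τ : Fin 2) (S : Set (List (Fin 4))),
    (∀ p ∈ S, p.length = L) →
    (∀ p ∈ S, ∀ q, q.length = L → tmIndex τ p ≤ tmIndex τ q → q ∈ S) →
    List.replicate L (2:Fin 4) ∈ S →
    ∃ f : Fin (L + 1) → Set (List (Fin 4)),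
      S = (⋃ i, f i) ∧ (∀ i, triFaceConnected x (f i)) ∧ List.replicate L (2:Fin 4) ∈ f 0 := by
  intro L
  induction L with
  | zero =>
    intro x hD τ S hlen hup hanchor
    refine ⟨fun _ => {[]}, ?_, fun _ => conn_singleton x [], rfl⟩
    ext p
    simp only [Set.mem_iUnion, Set.mem_singleton_iff]
    constructor
    · intro hp
      exact ⟨0, List.length_eq_zero_iff.mp (hlen p hp)⟩
    · rintro ⟨_, rfl⟩
      simpa using hanchor
  | succ L ih =>
    intro x hD τ S hlen hup hanchor
    have hlenc : ∀ i : Fin 4, ∀ p ∈ subSet S i, p.length = L := by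
      intro i p hp
      have := hlen _ hp
      simpa using this
    set Fimg : Fin 4 → Set (List (Fin 4)) :=
      fun i => (fun p => i :: p) '' {p : List (Fin 4) | p.length = L} with hFimg
    have hFconn : ∀ i : Fin 4, triFaceConnected x (Fimg i) :=
      fun i => conn_image (full_conn L _ (detT_beyChild hD i))
    rw [List.replicate_succ] at hanchor
    have h2 : (subSet S 2).Nonempty := ⟨List.replicate L 2, hanchor⟩
    fin_cases τ
    · by_cases h0 : (subSet S 0).Nonempty
      · obtain ⟨w, hw⟩ := h0
        have htw : List.replicate L (2:Fin 4) ∈ subSet S 0 :=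
          sub_up 0 hlen hup hw (by simp) (idx_le_allTwos _ (hlenc 0 w hw))
        obtain ⟨f', hU', hconn', hanc'⟩ := ih (beyChild x 0) (detT_beyChild hD 0) _ (subSet S 0)
          (hlenc 0) (fun p hp q hq hle => sub_up 0 hlen hup hp hq hle) htw
        have himg : (fun p => (0:Fin 4) :: p) '' (f' 0) ⊆ (fun p => (0:Fin 4) :: p) '' (subSet S 0) :=
          Set.image_mono (hU' ▸ Set.subset_iUnion f' 0)
        apply assemble x 0 L S ((Fimg 3 ∪ Fimg 1) ∪ Fimg 2) (((((fun p => (0:Fin 4) :: p) '' (f' 0) ∪ Fimg 3) ∪ Fimg 1) ∪ Fimg 2)) (subSet S 0) ?_ ?_ ?_ f' hU' hconn' ?_ _ ?_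
        · ext p
          constructor
          · intro hp
            have hl := hlen p hp
            cases p with
            | nil => simp only [List.length_nil] at hl; omega
            | cons i p' =>
              have hl' : p'.length = L := by simpa using hl
              fin_cases i
              · exact Or.inr ⟨p', hp, rfl⟩
              · exact Or.inl (Or.inl (Or.inr ⟨p', hl', rfl⟩))
              · exact Or.inl (Or.inr ⟨p', hl', rfl⟩)
              · exact Or.inl (Or.inl (Or.inl ⟨p', hl', rfl⟩))
          · rintro (hG | ⟨q, hq, rfl⟩)
            ·
              rcases hG with ((⟨q, hq, rfl⟩ | ⟨q, hq, rfl⟩) | ⟨q, hq, rfl⟩)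
              · exact sub_full 0 3 hlen hup (by decide) hw hq
              · exact sub_full 0 1 hlen hup (by decide) hw hq
              · exact sub_full 0 2 hlen hup (by decide) hw hq
            · exact hq
        ·
          rintro p ((h | h) | h)
          · exact Or.inl (Or.inl (Or.inr h))
          · exact Or.inl (Or.inr h)
          · exact Or.inr h
        ·
          rintro p (((h | h) | h) | h)
          · exact Or.inr (himg h)
          · exact Or.inl (Or.inl (Or.inl h))
          · exact Or.inl (Or.inl (Or.inr h))
          · exact Or.inl (Or.inr h)
        ·
          have c0 := conn_image (x0 := x) (i := 0) (hconn' 0)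
          have u1 := conn_union c0 (hFconn 3) ⟨List.replicate L (2:Fin 4), hanc', rfl⟩ ⟨List.replicate L (1:Fin 4), by simp, rfl⟩ (bridge03 x hD L)
          have u2 := conn_union u1 (hFconn 1) (Or.inr ⟨List.replicate L (2:Fin 4), by simp, rfl⟩) ⟨List.replicate L (2:Fin 4), by simp, rfl⟩
            (triFaceNbr_symm (bridge13 x hD L))
          exact conn_union u2 (hFconn 2) (Or.inl (Or.inr ⟨List.replicate L (2:Fin 4), by simp, rfl⟩)) ⟨List.replicate L (1:Fin 4), by simp, rfl⟩
            (triFaceNbr_symm (bridge23 x hD L))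
        · rw [List.replicate_succ]
          exact Or.inr ⟨List.replicate L (2:Fin 4), by simp, rfl⟩
      · by_cases h1 : (subSet S 1).Nonempty
        · obtain ⟨w, hw⟩ := h1
          have htw : List.replicate L (2:Fin 4) ∈ subSet S 1 :=
            sub_up 1 hlen hup hw (by simp) (idx_le_allTwos _ (hlenc 1 w hw))
          obtain ⟨f', hU', hconn', hanc'⟩ := ih (beyChild x 1) (detT_beyChild hD 1) _ (subSet S 1)
            (hlenc 1) (fun p hp q hq hle => sub_up 1 hlen hup hp hq hle) htw
          have himg : (fun p => (1:Fin 4) :: p) '' (f' 0) ⊆ (fun p => (1:Fin 4) :: p) '' (subSet S 1) :=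
            Set.image_mono (hU' ▸ Set.subset_iUnion f' 0)
          apply assemble x 1 L S (Fimg 3 ∪ Fimg 2) ((((fun p => (1:Fin 4) :: p) '' (f' 0) ∪ Fimg 3) ∪ Fimg 2)) (subSet S 1) ?_ ?_ ?_ f' hU' hconn' ?_ _ ?_
          · ext p
            constructor
            · intro hp
              have hl := hlen p hp
              cases p with
              | nil => simp only [List.length_nil] at hl; omega
              | cons i p' =>
                have hl' : p'.length = L := by simpa using hl
                fin_cases i
                · exact absurd ⟨p', hp⟩ h0
                · exact Or.inr ⟨p', hp, rfl⟩
                · exact Or.inl (Or.inr ⟨p', hl', rfl⟩)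
                · exact Or.inl (Or.inl ⟨p', hl', rfl⟩)
            · rintro (hG | ⟨q, hq, rfl⟩)
              ·
                rcases hG with (⟨q, hq, rfl⟩ | ⟨q, hq, rfl⟩)
                · exact sub_full 1 3 hlen hup (by decide) hw hq
                · exact sub_full 1 2 hlen hup (by decide) hw hq
              · exact hq
          ·
            rintro p (h | h)
            · exact Or.inl (Or.inr h)
            · exact Or.inr h
          ·
            rintro p ((h | h) | h)
            · exact Or.inr (himg h)
            · exact Or.inl (Or.inl h)
            · exact Or.inl (Or.inr h)
          ·
            have c1 := conn_image (x0 := x) (i := 1) (hconn' 0)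
            have u1 := conn_union c1 (hFconn 3) ⟨List.replicate L (2:Fin 4), hanc', rfl⟩ ⟨List.replicate L (2:Fin 4), by simp, rfl⟩ (bridge13 x hD L)
            exact conn_union u1 (hFconn 2) (Or.inr ⟨List.replicate L (2:Fin 4), by simp, rfl⟩) ⟨List.replicate L (1:Fin 4), by simp, rfl⟩
              (triFaceNbr_symm (bridge23 x hD L))
          · rw [List.replicate_succ]
            exact Or.inr ⟨List.replicate L (2:Fin 4), by simp, rfl⟩
        · by_cases h3 : (subSet S 3).Nonempty
          · obtain ⟨w, hw⟩ := h3
            have htw : List.replicate L (2:Fin 4) ∈ subSet S 3 :=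
              sub_up 3 hlen hup hw (by simp) (idx_le_allTwos _ (hlenc 3 w hw))
            obtain ⟨f', hU', hconn', hanc'⟩ := ih (beyChild x 3) (detT_beyChild hD 3) _ (subSet S 3)
              (hlenc 3) (fun p hp q hq hle => sub_up 3 hlen hup hp hq hle) htw
            have himg : (fun p => (3:Fin 4) :: p) '' (f' 0) ⊆ (fun p => (3:Fin 4) :: p) '' (subSet S 3) :=
              Set.image_mono (hU' ▸ Set.subset_iUnion f' 0)
            apply assemble x 3 L S (Fimg 2) (((fun p => (3:Fin 4) :: p) '' (f' 0) ∪ Fimg 2)) (subSet S 3) ?_ ?_ ?_ f' hU' hconn' ?_ _ ?_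
            · ext p
              constructor
              · intro hp
                have hl := hlen p hp
                cases p with
                | nil => simp only [List.length_nil] at hl; omega
                | cons i p' =>
                  have hl' : p'.length = L := by simpa using hl
                  fin_cases i
                  · exact absurd ⟨p', hp⟩ h0
                  · exact absurd ⟨p', hp⟩ h1
                  · exact Or.inl ⟨p', hl', rfl⟩
                  · exact Or.inr ⟨p', hp, rfl⟩
              · rintro (hG | ⟨q, hq, rfl⟩)
                ·
                  obtain ⟨q, hq, rfl⟩ := hG
                  exact sub_full 3 2 hlen hup (by decide) hw hq
                · exact hq
            ·
              intro p h
              exact Or.inr h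
            ·
              rintro p (h | h)
              · exact Or.inr (himg h)
              · exact Or.inl h
            ·
              have c3 := conn_image (x0 := x) (i := 3) (hconn' 0)
              exact conn_union c3 (hFconn 2) ⟨List.replicate L (2:Fin 4), hanc', rfl⟩ ⟨List.replicate L (1:Fin 4), by simp, rfl⟩
                (triFaceNbr_symm (bridge23 x hD L))
            · rw [List.replicate_succ]
              exact Or.inr ⟨List.replicate L (2:Fin 4), by simp, rfl⟩
          · obtain ⟨w, hw⟩ := h2
            have htw : List.replicate L (2:Fin 4) ∈ subSet S 2 :=
              sub_up 2 hlen hup hw (by simp) (idx_le_allTwos _ (hlenc 2 w hw))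
            obtain ⟨f', hU', hconn', hanc'⟩ := ih (beyChild x 2) (detT_beyChild hD 2) _ (subSet S 2)
              (hlenc 2) (fun p hp q hq hle => sub_up 2 hlen hup hp hq hle) htw
            have himg : (fun p => (2:Fin 4) :: p) '' (f' 0) ⊆ (fun p => (2:Fin 4) :: p) '' (subSet S 2) :=
              Set.image_mono (hU' ▸ Set.subset_iUnion f' 0)
            apply assemble x 2 L S (∅ : Set (List (Fin 4))) (((fun p => (2:Fin 4) :: p) '' (f' 0))) (subSet S 2) ?_ ?_ ?_ f' hU' hconn' ?_ _ ?_
            · ext p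
              constructor
              · intro hp
                have hl := hlen p hp
                cases p with
                | nil => simp only [List.length_nil] at hl; omega
                | cons i p' =>
                  have hl' : p'.length = L := by simpa using hl
                  fin_cases i
                  · exact absurd ⟨p', hp⟩ h0
                  · exact absurd ⟨p', hp⟩ h1
                  · exact Or.inr ⟨p', hp, rfl⟩
                  · exact absurd ⟨p', hp⟩ h3
              · rintro (hG | ⟨q, hq, rfl⟩)
                ·
                  exact absurd hG (Set.notMem_empty p)
                · exact hq
            ·
              exact Set.empty_subset _
            ·
              intro p h
              exact Or.inr (himg h)
            ·
              exact conn_image (x0 := x) (i := 2) (hconn' 0)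
            · rw [List.replicate_succ]
              exact ⟨List.replicate L (2:Fin 4), hanc', rfl⟩
    · by_cases h0 : (subSet S 0).Nonempty
      · obtain ⟨w, hw⟩ := h0
        have htw : List.replicate L (2:Fin 4) ∈ subSet S 0 :=
          sub_up 0 hlen hup hw (by simp) (idx_le_allTwos _ (hlenc 0 w hw))
        obtain ⟨f', hU', hconn', hanc'⟩ := ih (beyChild x 0) (detT_beyChild hD 0) _ (subSet S 0)
          (hlenc 0) (fun p hp q hq hle => sub_up 0 hlen hup hp hq hle) htw
        have himg : (fun p => (0:Fin 4) :: p) '' (f' 0) ⊆ (fun p => (0:Fin 4) :: p) '' (subSet S 0) :=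
          Set.image_mono (hU' ▸ Set.subset_iUnion f' 0)
        apply assemble x 0 L S ((Fimg 3 ∪ Fimg 1) ∪ Fimg 2) (((((fun p => (0:Fin 4) :: p) '' (f' 0) ∪ Fimg 3) ∪ Fimg 1) ∪ Fimg 2)) (subSet S 0) ?_ ?_ ?_ f' hU' hconn' ?_ _ ?_
        · ext p
          constructor
          · intro hp
            have hl := hlen p hp
            cases p with
            | nil => simp only [List.length_nil] at hl; omega
            | cons i p' =>
              have hl' : p'.length = L := by simpa using hl
              fin_cases i
              · exact Or.inr ⟨p', hp, rfl⟩
              · exact Or.inl (Or.inl (Or.inr ⟨p', hl', rfl⟩))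
              · exact Or.inl (Or.inr ⟨p', hl', rfl⟩)
              · exact Or.inl (Or.inl (Or.inl ⟨p', hl', rfl⟩))
          · rintro (hG | ⟨q, hq, rfl⟩)
            ·
              rcases hG with ((⟨q, hq, rfl⟩ | ⟨q, hq, rfl⟩) | ⟨q, hq, rfl⟩)
              · exact sub_full 0 3 hlen hup (by decide) hw hq
              · exact sub_full 0 1 hlen hup (by decide) hw hq
              · exact sub_full 0 2 hlen hup (by decide) hw hq
            · exact hq
        ·
          rintro p ((h | h) | h)
          · exact Or.inl (Or.inl (Or.inr h))
          · exact Or.inl (Or.inr h)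
          · exact Or.inr h
        ·
          rintro p (((h | h) | h) | h)
          · exact Or.inr (himg h)
          · exact Or.inl (Or.inl (Or.inl h))
          · exact Or.inl (Or.inl (Or.inr h))
          · exact Or.inl (Or.inr h)
        ·
          have c0 := conn_image (x0 := x) (i := 0) (hconn' 0)
          have u1 := conn_union c0 (hFconn 3) ⟨List.replicate L (2:Fin 4), hanc', rfl⟩ ⟨List.replicate L (1:Fin 4), by simp, rfl⟩ (bridge03 x hD L)
          have u2 := conn_union u1 (hFconn 1) (Or.inr ⟨List.replicate L (2:Fin 4), by simp, rfl⟩) ⟨List.replicate L (2:Fin 4), by simp, rfl⟩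
            (triFaceNbr_symm (bridge13 x hD L))
          exact conn_union u2 (hFconn 2) (Or.inl (Or.inr ⟨List.replicate L (2:Fin 4), by simp, rfl⟩)) ⟨List.replicate L (1:Fin 4), by simp, rfl⟩
            (triFaceNbr_symm (bridge23 x hD L))
        · rw [List.replicate_succ]
          exact Or.inr ⟨List.replicate L (2:Fin 4), by simp, rfl⟩
      · by_cases h3 : (subSet S 3).Nonempty
        · obtain ⟨w, hw⟩ := h3
          have htw : List.replicate L (2:Fin 4) ∈ subSet S 3 :=
            sub_up 3 hlen hup hw (by simp) (idx_le_allTwos _ (hlenc 3 w hw))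
          obtain ⟨f', hU', hconn', hanc'⟩ := ih (beyChild x 3) (detT_beyChild hD 3) _ (subSet S 3)
            (hlenc 3) (fun p hp q hq hle => sub_up 3 hlen hup hp hq hle) htw
          have himg : (fun p => (3:Fin 4) :: p) '' (f' 0) ⊆ (fun p => (3:Fin 4) :: p) '' (subSet S 3) :=
            Set.image_mono (hU' ▸ Set.subset_iUnion f' 0)
          apply assemble x 3 L S (Fimg 1 ∪ Fimg 2) ((((fun p => (3:Fin 4) :: p) '' (f' 0) ∪ Fimg 1) ∪ Fimg 2)) (subSet S 3) ?_ ?_ ?_ f' hU' hconn' ?_ _ ?_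
          · ext p
            constructor
            · intro hp
              have hl := hlen p hp
              cases p with
              | nil => simp only [List.length_nil] at hl; omega
              | cons i p' =>
                have hl' : p'.length = L := by simpa using hl
                fin_cases i
                · exact absurd ⟨p', hp⟩ h0
                · exact Or.inl (Or.inl ⟨p', hl', rfl⟩)
                · exact Or.inl (Or.inr ⟨p', hl', rfl⟩)
                · exact Or.inr ⟨p', hp, rfl⟩
            · rintro (hG | ⟨q, hq, rfl⟩)
              ·
                rcases hG with (⟨q, hq, rfl⟩ | ⟨q, hq, rfl⟩)
                · exact sub_full 3 1 hlen hup (by decide) hw hq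
                · exact sub_full 3 2 hlen hup (by decide) hw hq
              · exact hq
          ·
            rintro p (h | h)
            · exact Or.inl (Or.inr h)
            · exact Or.inr h
          ·
            rintro p ((h | h) | h)
            · exact Or.inr (himg h)
            · exact Or.inl (Or.inl h)
            · exact Or.inl (Or.inr h)
          ·
            have c3 := conn_image (x0 := x) (i := 3) (hconn' 0)
            have u1 := conn_union c3 (hFconn 1) ⟨List.replicate L (2:Fin 4), hanc', rfl⟩ ⟨List.replicate L (2:Fin 4), by simp, rfl⟩
              (triFaceNbr_symm (bridge13 x hD L))
            exact conn_union u1 (hFconn 2) (Or.inl ⟨List.replicate L (2:Fin 4), hanc', rfl⟩) ⟨List.replicate L (1:Fin 4), by simp, rfl⟩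
              (triFaceNbr_symm (bridge23 x hD L))
          · rw [List.replicate_succ]
            exact Or.inr ⟨List.replicate L (2:Fin 4), by simp, rfl⟩
        · by_cases h1 : (subSet S 1).Nonempty
          · obtain ⟨w, hw⟩ := h1
            have htw : List.replicate L (2:Fin 4) ∈ subSet S 1 :=
              sub_up 1 hlen hup hw (by simp) (idx_le_allTwos _ (hlenc 1 w hw))
            obtain ⟨f', hU', hconn', hanc'⟩ := ih (beyChild x 1) (detT_beyChild hD 1) _ (subSet S 1)
              (hlenc 1) (fun p hp q hq hle => sub_up 1 hlen hup hp hq hle) htw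
            have himg : (fun p => (1:Fin 4) :: p) '' (f' 0) ⊆ (fun p => (1:Fin 4) :: p) '' (subSet S 1) :=
              Set.image_mono (hU' ▸ Set.subset_iUnion f' 0)
            apply assemble x 1 L S (Fimg 2) ((Fimg 2)) (subSet S 1) ?_ ?_ ?_ f' hU' hconn' ?_ _ ?_
            · ext p
              constructor
              · intro hp
                have hl := hlen p hp
                cases p with
                | nil => simp only [List.length_nil] at hl; omega
                | cons i p' =>
                  have hl' : p'.length = L := by simpa using hl
                  fin_cases i
                  · exact absurd ⟨p', hp⟩ h0
                  · exact Or.inr ⟨p', hp, rfl⟩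
                  · exact Or.inl ⟨p', hl', rfl⟩
                  · exact absurd ⟨p', hp⟩ h3
              · rintro (hG | ⟨q, hq, rfl⟩)
                ·
                  obtain ⟨q, hq, rfl⟩ := hG
                  exact sub_full 1 2 hlen hup (by decide) hw hq
                · exact hq
            ·
              intro p h
              exact h
            ·
              intro p h
              exact Or.inl h
            ·
              exact hFconn 2
            · rw [List.replicate_succ]
              exact ⟨List.replicate L (2:Fin 4), by simp, rfl⟩
          · obtain ⟨w, hw⟩ := h2
            have htw : List.replicate L (2:Fin 4) ∈ subSet S 2 :=
              sub_up 2 hlen hup hw (by simp) (idx_le_allTwos _ (hlenc 2 w hw))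
            obtain ⟨f', hU', hconn', hanc'⟩ := ih (beyChild x 2) (detT_beyChild hD 2) _ (subSet S 2)
              (hlenc 2) (fun p hp q hq hle => sub_up 2 hlen hup hp hq hle) htw
            have himg : (fun p => (2:Fin 4) :: p) '' (f' 0) ⊆ (fun p => (2:Fin 4) :: p) '' (subSet S 2) :=
              Set.image_mono (hU' ▸ Set.subset_iUnion f' 0)
            apply assemble x 2 L S (∅ : Set (List (Fin 4))) (((fun p => (2:Fin 4) :: p) '' (f' 0))) (subSet S 2) ?_ ?_ ?_ f' hU' hconn' ?_ _ ?_
            · ext p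
              constructor
              · intro hp
                have hl := hlen p hp
                cases p with
                | nil => simp only [List.length_nil] at hl; omega
                | cons i p' =>
                  have hl' : p'.length = L := by simpa using hl
                  fin_cases i
                  · exact absurd ⟨p', hp⟩ h0
                  · exact absurd ⟨p', hp⟩ h1
                  · exact Or.inr ⟨p', hp, rfl⟩
                  · exact absurd ⟨p', hp⟩ h3
              · rintro (hG | ⟨q, hq, rfl⟩)
                ·
                  exact absurd hG (Set.notMem_empty p)
                · exact hq
            ·
              exact Set.empty_subset _
            ·
              intro p h
              exact Or.inr (himg h)
            ·
              exact conn_image (x0 := x) (i := 2) (hconn' 0)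
            · rw [List.replicate_succ]
              exact ⟨List.replicate L (2:Fin 4), hanc', rfl⟩

lemma head_bound : ∀ (L : ℕ) (x : Fin 3 → TMV), detT x ≠ 0 → ∀ (τ : Fin 2) (S : Set (List (Fin 4))),
    (∀ p ∈ S, p.length = L) →
    (∀ p ∈ S, ∀ q, q.length = L → tmIndex τ q ≤ tmIndex τ p → q ∈ S) →
    List.replicate L (0:Fin 4) ∈ S →
    ∃ f : Fin (L + 1) → Set (List (Fin 4)),
      S = (⋃ i, f i) ∧ (∀ i, triFaceConnected x (f i)) ∧ List.replicate L (0:Fin 4) ∈ f 0 := by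
  intro L
  induction L with
  | zero =>
    intro x hD τ S hlen hup hanchor
    refine ⟨fun _ => {[]}, ?_, fun _ => conn_singleton x [], rfl⟩
    ext p
    simp only [Set.mem_iUnion, Set.mem_singleton_iff]
    constructor
    · intro hp
      exact ⟨0, List.length_eq_zero_iff.mp (hlen p hp)⟩
    · rintro ⟨_, rfl⟩
      simpa using hanchor
  | succ L ih =>
    intro x hD τ S hlen hup hanchor
    have hlenc : ∀ i : Fin 4, ∀ p ∈ subSet S i, p.length = L := by
      intro i p hp
      have := hlen _ hp
      simpa using this
    set Fimg : Fin 4 → Set (List (Fin 4)) :=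
      fun i => (fun p => i :: p) '' {p : List (Fin 4) | p.length = L} with hFimg
    have hFconn : ∀ i : Fin 4, triFaceConnected x (Fimg i) :=
      fun i => conn_image (full_conn L _ (detT_beyChild hD i))
    rw [List.replicate_succ] at hanchor
    have h0 : (subSet S 0).Nonempty := ⟨List.replicate L 0, hanchor⟩
    fin_cases τ
    · by_cases h2 : (subSet S 2).Nonempty
      · obtain ⟨w, hw⟩ := h2
        have htw : List.replicate L (0:Fin 4) ∈ subSet S 2 :=
          sub_down 2 hlen hup hw (by simp) (idx_ge_allZeros _ w)
        obtain ⟨f', hU', hconn', hanc'⟩ := ih (beyChild x 2) (detT_beyChild hD 2) _ (subSet S 2)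
          (hlenc 2) (fun p hp q hq hle => sub_down 2 hlen hup hp hq hle) htw
        have himg : (fun p => (2:Fin 4) :: p) '' (f' 0) ⊆ (fun p => (2:Fin 4) :: p) '' (subSet S 2) :=
          Set.image_mono (hU' ▸ Set.subset_iUnion f' 0)
        apply assemble x 2 L S ((Fimg 3 ∪ Fimg 0) ∪ Fimg 1) (((Fimg 3 ∪ Fimg 0) ∪ Fimg 1)) (subSet S 2) ?_ ?_ ?_ f' hU' hconn' ?_ _ ?_
        · ext p
          constructor
          · intro hp
            have hl := hlen p hp
            cases p with
            | nil => simp only [List.length_nil] at hl; omega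
            | cons i p' =>
              have hl' : p'.length = L := by simpa using hl
              fin_cases i
              · exact Or.inl (Or.inl (Or.inr ⟨p', hl', rfl⟩))
              · exact Or.inl (Or.inr ⟨p', hl', rfl⟩)
              · exact Or.inr ⟨p', hp, rfl⟩
              · exact Or.inl (Or.inl (Or.inl ⟨p', hl', rfl⟩))
          · rintro (hG | ⟨q, hq, rfl⟩)
            ·
              rcases hG with ((⟨q, hq, rfl⟩ | ⟨q, hq, rfl⟩) | ⟨q, hq, rfl⟩)
              · exact sub_full_down 2 3 hlen hup (by decide) hw hq
              · exact sub_full_down 2 0 hlen hup (by decide) hw hq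
              · exact sub_full_down 2 1 hlen hup (by decide) hw hq
            · exact hq
        ·
          intro p h
          exact h
        ·
          intro p h
          exact Or.inl h
        ·
          have u1 := conn_union (hFconn 3) (hFconn 0) ⟨List.replicate L (0:Fin 4), by simp, rfl⟩ ⟨List.replicate L (1:Fin 4), by simp, rfl⟩
            (triFaceNbr_symm (bridge03L x hD L))
          exact conn_union u1 (hFconn 1) (Or.inl ⟨List.replicate L (0:Fin 4), by simp, rfl⟩) ⟨List.replicate L (0:Fin 4), by simp, rfl⟩
            (triFaceNbr_symm (bridge13L x hD L))
        · rw [List.replicate_succ]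
          exact Or.inl (Or.inr ⟨List.replicate L (0:Fin 4), by simp, rfl⟩)
      · by_cases h3 : (subSet S 3).Nonempty
        · obtain ⟨w, hw⟩ := h3
          have htw : List.replicate L (0:Fin 4) ∈ subSet S 3 :=
            sub_down 3 hlen hup hw (by simp) (idx_ge_allZeros _ w)
          obtain ⟨f', hU', hconn', hanc'⟩ := ih (beyChild x 3) (detT_beyChild hD 3) _ (subSet S 3)
            (hlenc 3) (fun p hp q hq hle => sub_down 3 hlen hup hp hq hle) htw
          have himg : (fun p => (3:Fin 4) :: p) '' (f' 0) ⊆ (fun p => (3:Fin 4) :: p) '' (subSet S 3) :=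
            Set.image_mono (hU' ▸ Set.subset_iUnion f' 0)
          apply assemble x 3 L S (Fimg 0 ∪ Fimg 1) ((((fun p => (3:Fin 4) :: p) '' (f' 0) ∪ Fimg 0) ∪ Fimg 1)) (subSet S 3) ?_ ?_ ?_ f' hU' hconn' ?_ _ ?_
          · ext p
            constructor
            · intro hp
              have hl := hlen p hp
              cases p with
              | nil => simp only [List.length_nil] at hl; omega
              | cons i p' =>
                have hl' : p'.length = L := by simpa using hl
                fin_cases i
                · exact Or.inl (Or.inl ⟨p', hl', rfl⟩)
                · exact Or.inl (Or.inr ⟨p', hl', rfl⟩)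
                · exact absurd ⟨p', hp⟩ h2
                · exact Or.inr ⟨p', hp, rfl⟩
            · rintro (hG | ⟨q, hq, rfl⟩)
              ·
                rcases hG with (⟨q, hq, rfl⟩ | ⟨q, hq, rfl⟩)
                · exact sub_full_down 3 0 hlen hup (by decide) hw hq
                · exact sub_full_down 3 1 hlen hup (by decide) hw hq
              · exact hq
          ·
            rintro p (h | h)
            · exact Or.inl (Or.inr h)
            · exact Or.inr h
          ·
            rintro p ((h | h) | h)
            · exact Or.inr (himg h)
            · exact Or.inl (Or.inl h)
            · exact Or.inl (Or.inr h)
          ·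
            have c3 := conn_image (x0 := x) (i := 3) (hconn' 0)
            have u1 := conn_union c3 (hFconn 0) ⟨List.replicate L (0:Fin 4), hanc', rfl⟩ ⟨List.replicate L (1:Fin 4), by simp, rfl⟩
              (triFaceNbr_symm (bridge03L x hD L))
            exact conn_union u1 (hFconn 1) (Or.inl ⟨List.replicate L (0:Fin 4), hanc', rfl⟩) ⟨List.replicate L (0:Fin 4), by simp, rfl⟩
              (triFaceNbr_symm (bridge13L x hD L))
          · rw [List.replicate_succ]
            exact Or.inl (Or.inr ⟨List.replicate L (0:Fin 4), by simp, rfl⟩)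
        · by_cases h1 : (subSet S 1).Nonempty
          · obtain ⟨w, hw⟩ := h1
            have htw : List.replicate L (0:Fin 4) ∈ subSet S 1 :=
              sub_down 1 hlen hup hw (by simp) (idx_ge_allZeros _ w)
            obtain ⟨f', hU', hconn', hanc'⟩ := ih (beyChild x 1) (detT_beyChild hD 1) _ (subSet S 1)
              (hlenc 1) (fun p hp q hq hle => sub_down 1 hlen hup hp hq hle) htw
            have himg : (fun p => (1:Fin 4) :: p) '' (f' 0) ⊆ (fun p => (1:Fin 4) :: p) '' (subSet S 1) :=
              Set.image_mono (hU' ▸ Set.subset_iUnion f' 0)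
            apply assemble x 1 L S (Fimg 0) ((Fimg 0)) (subSet S 1) ?_ ?_ ?_ f' hU' hconn' ?_ _ ?_
            · ext p
              constructor
              · intro hp
                have hl := hlen p hp
                cases p with
                | nil => simp only [List.length_nil] at hl; omega
                | cons i p' =>
                  have hl' : p'.length = L := by simpa using hl
                  fin_cases i
                  · exact Or.inl ⟨p', hl', rfl⟩
                  · exact Or.inr ⟨p', hp, rfl⟩
                  · exact absurd ⟨p', hp⟩ h2
                  · exact absurd ⟨p', hp⟩ h3
              · rintro (hG | ⟨q, hq, rfl⟩)
                ·
                  obtain ⟨q, hq, rfl⟩ := hG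
                  exact sub_full_down 1 0 hlen hup (by decide) hw hq
                · exact hq
            ·
              intro p h
              exact h
            ·
              intro p h
              exact Or.inl h
            ·
              exact hFconn 0
            · rw [List.replicate_succ]
              exact ⟨List.replicate L (0:Fin 4), by simp, rfl⟩
          · obtain ⟨w, hw⟩ := h0
            have htw : List.replicate L (0:Fin 4) ∈ subSet S 0 :=
              sub_down 0 hlen hup hw (by simp) (idx_ge_allZeros _ w)
            obtain ⟨f', hU', hconn', hanc'⟩ := ih (beyChild x 0) (detT_beyChild hD 0) _ (subSet S 0)
              (hlenc 0) (fun p hp q hq hle => sub_down 0 hlen hup hp hq hle) htw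
            have himg : (fun p => (0:Fin 4) :: p) '' (f' 0) ⊆ (fun p => (0:Fin 4) :: p) '' (subSet S 0) :=
              Set.image_mono (hU' ▸ Set.subset_iUnion f' 0)
            apply assemble x 0 L S (∅ : Set (List (Fin 4))) (((fun p => (0:Fin 4) :: p) '' (f' 0))) (subSet S 0) ?_ ?_ ?_ f' hU' hconn' ?_ _ ?_
            · ext p
              constructor
              · intro hp
                have hl := hlen p hp
                cases p with
                | nil => simp only [List.length_nil] at hl; omega
                | cons i p' =>
                  have hl' : p'.length = L := by simpa using hl
                  fin_cases i
                  · exact Or.inr ⟨p', hp, rfl⟩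
                  · exact absurd ⟨p', hp⟩ h1
                  · exact absurd ⟨p', hp⟩ h2
                  · exact absurd ⟨p', hp⟩ h3
              · rintro (hG | ⟨q, hq, rfl⟩)
                ·
                  exact absurd hG (Set.notMem_empty p)
                · exact hq
            ·
              exact Set.empty_subset _
            ·
              intro p h
              exact Or.inr (himg h)
            ·
              exact conn_image (x0 := x) (i := 0) (hconn' 0)
            · rw [List.replicate_succ]
              exact ⟨List.replicate L (0:Fin 4), hanc', rfl⟩
    · by_cases h2 : (subSet S 2).Nonempty
      · obtain ⟨w, hw⟩ := h2
        have htw : List.replicate L (0:Fin 4) ∈ subSet S 2 :=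
          sub_down 2 hlen hup hw (by simp) (idx_ge_allZeros _ w)
        obtain ⟨f', hU', hconn', hanc'⟩ := ih (beyChild x 2) (detT_beyChild hD 2) _ (subSet S 2)
          (hlenc 2) (fun p hp q hq hle => sub_down 2 hlen hup hp hq hle) htw
        have himg : (fun p => (2:Fin 4) :: p) '' (f' 0) ⊆ (fun p => (2:Fin 4) :: p) '' (subSet S 2) :=
          Set.image_mono (hU' ▸ Set.subset_iUnion f' 0)
        apply assemble x 2 L S ((Fimg 3 ∪ Fimg 0) ∪ Fimg 1) (((Fimg 3 ∪ Fimg 0) ∪ Fimg 1)) (subSet S 2) ?_ ?_ ?_ f' hU' hconn' ?_ _ ?_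
        · ext p
          constructor
          · intro hp
            have hl := hlen p hp
            cases p with
            | nil => simp only [List.length_nil] at hl; omega
            | cons i p' =>
              have hl' : p'.length = L := by simpa using hl
              fin_cases i
              · exact Or.inl (Or.inl (Or.inr ⟨p', hl', rfl⟩))
              · exact Or.inl (Or.inr ⟨p', hl', rfl⟩)
              · exact Or.inr ⟨p', hp, rfl⟩
              · exact Or.inl (Or.inl (Or.inl ⟨p', hl', rfl⟩))
          · rintro (hG | ⟨q, hq, rfl⟩)
            ·
              rcases hG with ((⟨q, hq, rfl⟩ | ⟨q, hq, rfl⟩) | ⟨q, hq, rfl⟩)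
              · exact sub_full_down 2 3 hlen hup (by decide) hw hq
              · exact sub_full_down 2 0 hlen hup (by decide) hw hq
              · exact sub_full_down 2 1 hlen hup (by decide) hw hq
            · exact hq
        ·
          intro p h
          exact h
        ·
          intro p h
          exact Or.inl h
        ·
          have u1 := conn_union (hFconn 3) (hFconn 0) ⟨List.replicate L (0:Fin 4), by simp, rfl⟩ ⟨List.replicate L (1:Fin 4), by simp, rfl⟩
            (triFaceNbr_symm (bridge03L x hD L))
          exact conn_union u1 (hFconn 1) (Or.inl ⟨List.replicate L (0:Fin 4), by simp, rfl⟩) ⟨List.replicate L (0:Fin 4), by simp, rfl⟩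
            (triFaceNbr_symm (bridge13L x hD L))
        · rw [List.replicate_succ]
          exact Or.inl (Or.inr ⟨List.replicate L (0:Fin 4), by simp, rfl⟩)
      · by_cases h1 : (subSet S 1).Nonempty
        · obtain ⟨w, hw⟩ := h1
          have htw : List.replicate L (0:Fin 4) ∈ subSet S 1 :=
            sub_down 1 hlen hup hw (by simp) (idx_ge_allZeros _ w)
          obtain ⟨f', hU', hconn', hanc'⟩ := ih (beyChild x 1) (detT_beyChild hD 1) _ (subSet S 1)
            (hlenc 1) (fun p hp q hq hle => sub_down 1 hlen hup hp hq hle) htw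
          have himg : (fun p => (1:Fin 4) :: p) '' (f' 0) ⊆ (fun p => (1:Fin 4) :: p) '' (subSet S 1) :=
            Set.image_mono (hU' ▸ Set.subset_iUnion f' 0)
          apply assemble x 1 L S (Fimg 3 ∪ Fimg 0) ((Fimg 3 ∪ Fimg 0)) (subSet S 1) ?_ ?_ ?_ f' hU' hconn' ?_ _ ?_
          · ext p
            constructor
            · intro hp
              have hl := hlen p hp
              cases p with
              | nil => simp only [List.length_nil] at hl; omega
              | cons i p' =>
                have hl' : p'.length = L := by simpa using hl
                fin_cases i
                · exact Or.inl (Or.inr ⟨p', hl', rfl⟩)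
                · exact Or.inr ⟨p', hp, rfl⟩
                · exact absurd ⟨p', hp⟩ h2
                · exact Or.inl (Or.inl ⟨p', hl', rfl⟩)
            · rintro (hG | ⟨q, hq, rfl⟩)
              ·
                rcases hG with (⟨q, hq, rfl⟩ | ⟨q, hq, rfl⟩)
                · exact sub_full_down 1 3 hlen hup (by decide) hw hq
                · exact sub_full_down 1 0 hlen hup (by decide) hw hq
              · exact hq
          ·
            intro p h
            exact h
          ·
            intro p h
            exact Or.inl h
          ·
            exact conn_union (hFconn 3) (hFconn 0) ⟨List.replicate L (0:Fin 4), by simp, rfl⟩ ⟨List.replicate L (1:Fin 4), by simp, rfl⟩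
              (triFaceNbr_symm (bridge03L x hD L))
          · rw [List.replicate_succ]
            exact Or.inr ⟨List.replicate L (0:Fin 4), by simp, rfl⟩
        · by_cases h3 : (subSet S 3).Nonempty
          · obtain ⟨w, hw⟩ := h3
            have htw : List.replicate L (0:Fin 4) ∈ subSet S 3 :=
              sub_down 3 hlen hup hw (by simp) (idx_ge_allZeros _ w)
            obtain ⟨f', hU', hconn', hanc'⟩ := ih (beyChild x 3) (detT_beyChild hD 3) _ (subSet S 3)
              (hlenc 3) (fun p hp q hq hle => sub_down 3 hlen hup hp hq hle) htw
            have himg : (fun p => (3:Fin 4) :: p) '' (f' 0) ⊆ (fun p => (3:Fin 4) :: p) '' (subSet S 3) :=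
              Set.image_mono (hU' ▸ Set.subset_iUnion f' 0)
            apply assemble x 3 L S (Fimg 0) ((Fimg 0)) (subSet S 3) ?_ ?_ ?_ f' hU' hconn' ?_ _ ?_
            · ext p
              constructor
              · intro hp
                have hl := hlen p hp
                cases p with
                | nil => simp only [List.length_nil] at hl; omega
                | cons i p' =>
                  have hl' : p'.length = L := by simpa using hl
                  fin_cases i
                  · exact Or.inl ⟨p', hl', rfl⟩
                  · exact absurd ⟨p', hp⟩ h1
                  · exact absurd ⟨p', hp⟩ h2
                  · exact Or.inr ⟨p', hp, rfl⟩
              · rintro (hG | ⟨q, hq, rfl⟩)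
                ·
                  obtain ⟨q, hq, rfl⟩ := hG
                  exact sub_full_down 3 0 hlen hup (by decide) hw hq
                · exact hq
            ·
              intro p h
              exact h
            ·
              intro p h
              exact Or.inl h
            ·
              exact hFconn 0
            · rw [List.replicate_succ]
              exact ⟨List.replicate L (0:Fin 4), by simp, rfl⟩
          · obtain ⟨w, hw⟩ := h0
            have htw : List.replicate L (0:Fin 4) ∈ subSet S 0 :=
              sub_down 0 hlen hup hw (by simp) (idx_ge_allZeros _ w)
            obtain ⟨f', hU', hconn', hanc'⟩ := ih (beyChild x 0) (detT_beyChild hD 0) _ (subSet S 0)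
              (hlenc 0) (fun p hp q hq hle => sub_down 0 hlen hup hp hq hle) htw
            have himg : (fun p => (0:Fin 4) :: p) '' (f' 0) ⊆ (fun p => (0:Fin 4) :: p) '' (subSet S 0) :=
              Set.image_mono (hU' ▸ Set.subset_iUnion f' 0)
            apply assemble x 0 L S (∅ : Set (List (Fin 4))) (((fun p => (0:Fin 4) :: p) '' (f' 0))) (subSet S 0) ?_ ?_ ?_ f' hU' hconn' ?_ _ ?_
            · ext p
              constructor
              · intro hp
                have hl := hlen p hp
                cases p with
                | nil => simp only [List.length_nil] at hl; omega
                | cons i p' =>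
                  have hl' : p'.length = L := by simpa using hl
                  fin_cases i
                  · exact Or.inr ⟨p', hp, rfl⟩
                  · exact absurd ⟨p', hp⟩ h1
                  · exact absurd ⟨p', hp⟩ h2
                  · exact absurd ⟨p', hp⟩ h3
              · rintro (hG | ⟨q, hq, rfl⟩)
                ·
                  exact absurd hG (Set.notMem_empty p)
                · exact hq
            ·
              exact Set.empty_subset _
            ·
              intro p h
              exact Or.inr (himg h)
            ·
              exact conn_image (x0 := x) (i := 0) (hconn' 0)
            · rw [List.replicate_succ]
              exact ⟨List.replicate L (0:Fin 4), hanc', rfl⟩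


/-- For a root triangle of type `τ` uniformly refined to level `L`, any contiguous TM
segment containing the last, or containing the first, level-`L` subtriangle in TM order
has at most `L + 1` face-connected components. -/
theorem tm_one_sided_segment_comp_bound (x0 : Fin 3 → TMV)
    (hx0 : AffineIndependent ℝ x0) (L : ℕ) (τ : Fin 2)
    (S : Set (List (Fin 4))) (hS : tmSegment τ L S)
    (hside : (∃ p ∈ S, tmIndex τ p = 4 ^ L - 1) ∨ (∃ p ∈ S, tmIndex τ p = 0)) :
    triCompBound x0 S (L + 1) := by
  have hD : detT x0 ≠ 0 := detT_ne_zero_of_affineIndependent hx0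
  rcases hside with ⟨pm, hpm, hidx⟩ | ⟨pm, hpm, hidx⟩
  · -- contains the last subtriangle
    have hup : ∀ p ∈ S, ∀ q, q.length = L → tmIndex τ p ≤ tmIndex τ q → q ∈ S := by
      intro p hp q hq hle
      refine hS.2 p q pm (hS.1 p hp) hq (hS.1 pm hpm) hp hpm hle ?_
      rw [hidx]
      have := idx_lt τ q
      rw [hq] at this
      omega
    have hanchor : List.replicate L (2:Fin 4) ∈ S := by
      refine hup pm hpm _ (by simp) ?_
      rw [hidx, idx_allTwos]
    obtain ⟨f, hU, hconn, _⟩ := tail_bound L x0 hD τ S hS.1 hup hanchor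
    exact ⟨f, hU, hconn⟩
  · -- contains the first subtriangle
    have hdn : ∀ p ∈ S, ∀ q, q.length = L → tmIndex τ q ≤ tmIndex τ p → q ∈ S := by
      intro p hp q hq hle
      refine hS.2 pm q p (hS.1 pm hpm) hq (hS.1 p hp) hpm hp ?_ hle
      rw [hidx]
      exact Nat.zero_le _
    have hanchor : List.replicate L (0:Fin 4) ∈ S := by
      refine hdn pm hpm _ (by simp) ?_
      rw [idx_allZeros]
      exact Nat.zero_le _
    obtain ⟨f, hU, hconn, _⟩ := head_bound L x0 hD τ S hS.1 hdn hanchor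
    exact ⟨f, hU, hconn⟩
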